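/- Let X be a discrete random variable taking finitely many real values, with CDF F_X and probability mass function P_X, and let θ be uniformly distributed on [0,1] and independent of X. Then the random variable Y = F_X(X) − θ·P_X(X) is uniformly distributed on [0,1]. -/

import Mathlib

open MeasureTheory Set

private lemma aux_clamp_id (p a b t : ℝ) (hp : 0 < p) (hab : b - a = p) :
    p * (1 - min 1 (max 0 ((b - t) / p))) = min t b - min t a := by
  have hab' : a ≤ b := by linarith
  rcases le_total t a with h | h
  · have h1 : (1:ℝ) ≤ (b - t) / p := by rw [le_div_iff₀ hp]; linarith
    rw [max_eq_right (le_trans zero_le_one h1), min_eq_left h1,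
      min_eq_left h, min_eq_left (le_trans h hab')]
    ring
  · rcases le_total b t with h2 | h2
    · have hnp : (b - t) / p ≤ 0 := div_nonpos_of_nonpos_of_nonneg (by linarith) hp.le
      rw [max_eq_left hnp, min_eq_right zero_le_one,
        min_eq_right h2, min_eq_right h]
      linarith
    · have h1 : (b - t) / p ≤ 1 := by rw [div_le_one hp]; linarith
      have h0' : (0:ℝ) ≤ (b - t) / p := div_nonneg (by linarith) hp.le
      have hmain : p * (1 - (b - t) / p) = p - (b - t) := by field_simp
      rw [max_eq_right h0', min_eq_right h1, hmain, min_eq_left h2, min_eq_right h]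
      linarith

private lemma telescope_sum (W Wm : ℝ → ℝ) :
    ∀ (n : ℕ) (S : Finset ℝ), S.card = n →
      (∀ s ∈ S, (∀ s' ∈ S, ¬ s' < s) → Wm s = 0) →
      (∀ s ∈ S, ∀ s' ∈ S, s' < s → (∀ s'' ∈ S, s'' < s → s'' ≤ s') → Wm s = W s') →
      ∀ (hS : S.Nonempty), ∑ s ∈ S, (W s - Wm s) = W (S.max' hS) := by
  intro n
  induction n with
  | zero => intro S hc _ _ hS; rw [Finset.card_eq_zero.mp hc] at hS; exact absurd hS (by simp)
  | succ n ih =>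
    intro S hc h0 hp hS
    have hmS : S.max' hS ∈ S := S.max'_mem hS
    set m := S.max' hS with hm
    rw [← Finset.add_sum_erase _ _ hmS]
    rcases (S.erase m).eq_empty_or_nonempty with hE | hE
    · have hWm : Wm m = 0 := h0 m hmS (fun s' hs' hlt => by
        have hmem : s' ∈ S.erase m := Finset.mem_erase.mpr ⟨ne_of_lt hlt, hs'⟩
        rw [hE] at hmem; exact absurd hmem (by simp))
      rw [hE]; simp [hWm]
    · have hm'mem := (S.erase m).max'_mem hE
      set m' := (S.erase m).max' hE with hm'
      have hm'S : m' ∈ S := (Finset.mem_erase.mp hm'mem).2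
      have hm'lt : m' < m := lt_of_le_of_ne (S.le_max' m' hm'S) (Finset.mem_erase.mp hm'mem).1
      have hmax : ∀ s'' ∈ S, s'' < m → s'' ≤ m' := fun s'' hs'' hlt =>
        (S.erase m).le_max' s'' (Finset.mem_erase.mpr ⟨ne_of_lt hlt, hs''⟩)
      have hWm : Wm m = W m' := hp m hmS m' hm'S hm'lt hmax
      have hcard : (S.erase m).card = n := by
        rw [Finset.card_erase_of_mem hmS, hc]; omega
      have h0' : ∀ s ∈ S.erase m, (∀ s' ∈ S.erase m, ¬ s' < s) → Wm s = 0 := by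
        intro s hs hnone
        have hsS := (Finset.mem_erase.mp hs).2
        have hsle : s ≤ m' := (S.erase m).le_max' s hs
        refine h0 s hsS (fun s' hs' hlt => ?_)
        have hs'ne : s' ≠ m := by intro h; subst h; exact absurd (lt_of_lt_of_le hlt (le_trans hsle hm'lt.le)) (lt_irrefl m)
        exact hnone s' (Finset.mem_erase.mpr ⟨hs'ne, hs'⟩) hlt
      have hp' : ∀ s ∈ S.erase m, ∀ s' ∈ S.erase m, s' < s →
          (∀ s'' ∈ S.erase m, s'' < s → s'' ≤ s') → Wm s = W s' := by
        intro s hs s' hs' hlt hmax'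
        have hsS := (Finset.mem_erase.mp hs).2
        have hsle : s ≤ m' := (S.erase m).le_max' s hs
        refine hp s hsS s' (Finset.mem_erase.mp hs').2 hlt (fun s'' hs'' hlt'' => ?_)
        have hs''ne : s'' ≠ m := by intro h; subst h; exact absurd (lt_of_lt_of_le hlt'' (le_trans hsle hm'lt.le)) (lt_irrefl m)
        exact hmax' s'' (Finset.mem_erase.mpr ⟨hs''ne, hs''⟩) hlt''
      rw [ih (S.erase m) hcard h0' hp' hE, hWm]
      ring

/-- For a discrete random variable `X` with finitely many values, CDF `F` and pmf `pm`,
and `θ ~ Unif[0,1]` independent of `X`, the variable `Y = F(X) - θ·pm(X)` is uniform on `[0,1]`. -/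
theorem discrete_randomized_cdf_uniform
    {Ω : Type*} [MeasurableSpace Ω] (P : Measure Ω) [IsProbabilityMeasure P]
    (X θ : Ω → ℝ) (hX : Measurable X) (hθ : Measurable θ)
    (hfin : (Set.range X).Finite)
    (hindep : ProbabilityTheory.IndepFun X θ P)
    (hunif : ∀ t ∈ Icc (0 : ℝ) 1, P {ω | θ ω ≤ t} = ENNReal.ofReal t)
    (F pm : ℝ → ℝ)
    (hF : ∀ x, F x = (P {ω | X ω ≤ x}).toReal)
    (hpm : ∀ x, pm x = (P {ω | X ω = x}).toReal) :
    ∀ t ∈ Icc (0 : ℝ) 1,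
      P {ω | F (X ω) - θ ω * pm (X ω) ≤ t} = ENNReal.ofReal t := by
  intro t ht
  obtain ⟨ht0, ht1⟩ := ht
  set S : Finset ℝ := hfin.toFinset with hSdef
  have hmemS : ∀ ω, X ω ∈ S := fun ω => hfin.mem_toFinset.mpr ⟨ω, rfl⟩
  -- distribution of θ: P(θ < c)
  have hmid : ∀ c : ℝ, 0 ≤ c → c ≤ 1 → P {ω | θ ω < c} = ENNReal.ofReal c := by
    intro c hc hc1
    refine le_antisymm ?_ ?_
    · calc P {ω | θ ω < c} ≤ P {ω | θ ω ≤ c} :=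
            measure_mono (fun ω hω => by
              simp only [mem_setOf_eq] at hω ⊢; exact le_of_lt hω)
        _ = ENNReal.ofReal c := hunif c ⟨hc, hc1⟩
    · by_contra hcon
      push_neg at hcon
      have hfin' : P {ω | θ ω < c} ≠ ⊤ := measure_ne_top _ _
      have hqc : (P {ω | θ ω < c}).toReal < c := by
        have := (ENNReal.toReal_lt_toReal hfin' ENNReal.ofReal_ne_top).mpr hcon
        rwa [ENNReal.toReal_ofReal hc] at this
      have hq0 : 0 ≤ (P {ω | θ ω < c}).toReal := ENNReal.toReal_nonneg
      have hkey : ENNReal.ofReal (c - (c - (P {ω | θ ω < c}).toReal) / 2)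
          ≤ P {ω | θ ω < c} := by
        rw [← hunif _ ⟨by linarith, by linarith⟩]
        refine measure_mono (fun ω hω => ?_)
        simp only [mem_setOf_eq] at hω ⊢
        linarith
      have hle := (ENNReal.ofReal_le_iff_le_toReal hfin').mp hkey
      linarith
  have hθlt : ∀ c : ℝ, P {ω | θ ω < c} = ENNReal.ofReal (min 1 (max 0 c)) := by
    intro c
    rcases le_total c 0 with hc | hc
    · have hsub : {ω | θ ω < c} ⊆ {ω | θ ω ≤ 0} := fun ω hω => by
        simp only [mem_setOf_eq] at hω ⊢; linarith
      have h0 := hunif 0 ⟨le_refl _, zero_le_one⟩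
      have hz : P {ω | θ ω < c} = 0 := le_antisymm
        (by calc P {ω | θ ω < c} ≤ P {ω | θ ω ≤ 0} := measure_mono hsub
            _ = 0 := by rw [h0]; simp) zero_le
      rw [hz, max_eq_left hc]
      simp
    · rcases le_or_gt c 1 with hc1 | hc1
      · rw [max_eq_right hc, min_eq_right hc1]
        exact hmid c hc hc1
      · rw [max_eq_right hc, min_eq_left hc1.le, ENNReal.ofReal_one]
        refine le_antisymm prob_le_one ?_
        calc (1 : ENNReal) = ENNReal.ofReal 1 := by simp
          _ = P {ω | θ ω < 1} := (hmid 1 zero_le_one le_rfl).symm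
          _ ≤ P {ω | θ ω < c} := measure_mono (fun ω hω => by
              simp only [mem_setOf_eq] at hω ⊢; linarith)
  -- distribution of θ: P(θ ≥ c)
  have hθge : ∀ c : ℝ, P {ω | c ≤ θ ω} = ENNReal.ofReal (1 - min 1 (max 0 c)) := by
    intro c
    have hcompl : {ω | c ≤ θ ω} = {ω | θ ω < c}ᶜ := by ext ω; simp [not_lt]
    have hmeas : MeasurableSet {ω | θ ω < c} := measurableSet_lt hθ measurable_const
    have hcl0 : 0 ≤ min 1 (max 0 c) := le_min zero_le_one (le_max_left _ _)
    rw [hcompl, measure_compl hmeas (measure_ne_top _ _), hθlt c, measure_univ,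
      ENNReal.ofReal_sub _ hcl0, ENNReal.ofReal_one]
  -- decomposition
  have hXmeas : ∀ s : ℝ, MeasurableSet (X ⁻¹' {s}) := fun s => hX (measurableSet_singleton s)
  have hBmeas : ∀ s : ℝ, MeasurableSet {u : ℝ | F s - u * pm s ≤ t} :=
    fun s => measurableSet_le (measurable_const.sub (measurable_id.mul_const _)) measurable_const
  set A : ℝ → Set Ω := fun s => X ⁻¹' {s} ∩ θ ⁻¹' {u | F s - u * pm s ≤ t} with hA
  have hAmeas : ∀ s, MeasurableSet (A s) := fun s => (hXmeas s).inter (hθ (hBmeas s))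
  have hdecomp : {ω | F (X ω) - θ ω * pm (X ω) ≤ t} = ⋃ s ∈ S, A s := by
    ext ω
    simp only [mem_setOf_eq, mem_iUnion, hA, mem_inter_iff, mem_preimage, mem_singleton_iff,
      exists_prop]
    constructor
    · intro h; exact ⟨X ω, hmemS ω, rfl, h⟩
    · rintro ⟨s, _, rfl, h⟩; exact h
  have hdisj : (↑S : Set ℝ).PairwiseDisjoint A := by
    intro s _ s' _ hne
    refine Set.disjoint_left.mpr ?_
    rintro ω ⟨h1, _⟩ ⟨h2, _⟩
    exact hne ((mem_singleton_iff.mp h1).symm.trans (mem_singleton_iff.mp h2))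
  have hsum : P {ω | F (X ω) - θ ω * pm (X ω) ≤ t} = ∑ s ∈ S, P (A s) := by
    rw [hdecomp, measure_biUnion_finset hdisj (fun s _ => hAmeas s)]
  have hpm_nonneg : ∀ s, 0 ≤ pm s := fun s => by rw [hpm]; exact ENNReal.toReal_nonneg
  have hFpm : ∀ s, F s - pm s = (P {ω | X ω < s}).toReal := by
    intro s
    have hsplit : {ω | X ω ≤ s} = {ω | X ω < s} ∪ {ω | X ω = s} := by
      ext ω; simp [le_iff_lt_or_eq]
    have hdisj2 : Disjoint {ω | X ω < s} {ω | X ω = s} := by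
      refine Set.disjoint_left.mpr ?_
      intro ω h1 h2
      simp only [mem_setOf_eq] at h1 h2
      exact absurd h2 (ne_of_lt h1)
    have hmeq : P {ω | X ω ≤ s} = P {ω | X ω < s} + P {ω | X ω = s} := by
      rw [hsplit, measure_union hdisj2 (hX (measurableSet_singleton s))]
    rw [hF, hpm, hmeq, ENNReal.toReal_add (measure_ne_top _ _) (measure_ne_top _ _)]
    ring
  have hXset : ∀ s : ℝ, X ⁻¹' {s} = {ω | X ω = s} := by
    intro s; ext ω; simp
  have hterm : ∀ s ∈ S, P (A s) = ENNReal.ofReal (min t (F s) - min t (F s - pm s)) := by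
    intro s _
    have hprod : P (A s) = P (X ⁻¹' {s}) * P (θ ⁻¹' {u | F s - u * pm s ≤ t}) :=
      hindep.measure_inter_preimage_eq_mul _ _ (measurableSet_singleton s) (hBmeas s)
    rcases eq_or_lt_of_le (hpm_nonneg s) with h0 | hpos
    · have hP0 : P (X ⁻¹' {s}) = 0 := by
        have h' : (P {ω | X ω = s}).toReal = 0 := by rw [← hpm]; exact h0.symm
        rcases (ENNReal.toReal_eq_zero_iff _).mp h' with h | h
        · rw [hXset]; exact h
        · exact absurd h (measure_ne_top _ _)
      rw [hprod, hP0, zero_mul, ← h0]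
      simp
    · have hBset : {u : ℝ | F s - u * pm s ≤ t} = {u | (F s - t) / pm s ≤ u} := by
        ext u
        simp only [Set.mem_setOf_eq, div_le_iff₀ hpos]
        constructor <;> intro h <;> linarith
      have hPX : P (X ⁻¹' {s}) = ENNReal.ofReal (pm s) := by
        rw [hXset, hpm]
        exact (ENNReal.ofReal_toReal (measure_ne_top _ _)).symm
      have hθset : θ ⁻¹' {u | (F s - t) / pm s ≤ u} = {ω | (F s - t) / pm s ≤ θ ω} := by
        ext ω; simp
      have hPθ : P (θ ⁻¹' {u | F s - u * pm s ≤ t})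
          = ENNReal.ofReal (1 - min 1 (max 0 ((F s - t) / pm s))) := by
        rw [hBset, hθset]
        exact hθge ((F s - t) / pm s)
      rw [hprod, hPX, hPθ, ← ENNReal.ofReal_mul (hpm_nonneg s),
        aux_clamp_id (pm s) (F s - pm s) (F s) t hpos (by ring)]
  have hnonneg : ∀ s ∈ S, 0 ≤ min t (F s) - min t (F s - pm s) := by
    intro s _
    have h1 : F s - pm s ≤ F s := by linarith [hpm_nonneg s]
    have h2 := min_le_min (le_refl t) h1
    linarith
  rw [hsum, Finset.sum_congr rfl hterm, ← ENNReal.ofReal_sum_of_nonneg hnonneg]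
  congr 1
  -- telescoping
  have hΩ : Nonempty Ω := by
    by_contra h
    rw [not_nonempty_iff] at h
    have h1 : P univ = 0 := by rw [Set.univ_eq_empty_iff.mpr h]; exact measure_empty
    rw [measure_univ] at h1
    exact one_ne_zero h1
  obtain ⟨ω0⟩ := hΩ
  have hSne : S.Nonempty := ⟨X ω0, hmemS ω0⟩
  have h0tel : ∀ s ∈ S, (∀ s' ∈ S, ¬ s' < s) →
      (fun x => min t (F x - pm x)) s = 0 := by
    intro s _ hmin
    have hempty : {ω | X ω < s} = ∅ := by
      ext ω
      simp only [mem_setOf_eq, mem_empty_iff_false, iff_false]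
      exact hmin (X ω) (hmemS ω)
    simp only []
    rw [hFpm s, hempty, measure_empty]
    simp [min_eq_right ht0]
  have hptel : ∀ s ∈ S, ∀ s' ∈ S, s' < s → (∀ s'' ∈ S, s'' < s → s'' ≤ s') →
      (fun x => min t (F x - pm x)) s = (fun x => min t (F x)) s' := by
    intro s _ s' _ hlt hmax
    have hseteq : {ω | X ω < s} = {ω | X ω ≤ s'} := by
      ext ω
      simp only [mem_setOf_eq]
      exact ⟨fun h => hmax (X ω) (hmemS ω) h, fun h => lt_of_le_of_lt h hlt⟩
    simp only []
    rw [hFpm s, hseteq, ← hF s']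
  have htel := telescope_sum (fun x => min t (F x)) (fun x => min t (F x - pm x))
    S.card S rfl h0tel hptel hSne
  have hfinal : min t (F (S.max' hSne)) = t := by
    have huniv : {ω | X ω ≤ S.max' hSne} = univ := by
      ext ω
      simp only [mem_setOf_eq, mem_univ, iff_true]
      exact S.le_max' (X ω) (hmemS ω)
    rw [hF, huniv, measure_univ]
    simp [min_eq_left ht1]
  exact htel.trans hfinal
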